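/- Suppose c = 0, r > 0, η > r²/2, and ‖f‖ < ½(r²/2 − η)²/r. Then every z with ½(½‖z‖² − η)² − fᵗz = 0 satisfies ½(‖z‖² − r²) > 0, i.e., ‖z‖ > r. -/
import Mathlib

open scoped RealInnerProductSpace

/-- Every z on the surface g(z) = 0 satisfies h(z) > 0, i.e. ‖z‖ > r. -/
theorem stmt_4 (n : ℕ) (r η : ℝ) (f : EuclideanSpace ℝ (Fin n))
    (hr : 0 < r) (hη : r ^ 2 / 2 < η)
    (hf : ‖f‖ < 1 / 2 * (r ^ 2 / 2 - η) ^ 2 / r)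
    (z : EuclideanSpace ℝ (Fin n))
    (hz : 1 / 2 * (1 / 2 * ‖z‖ ^ 2 - η) ^ 2 - ⟪f, z⟫ = 0) :
    1 / 2 * (‖z‖ ^ 2 - r ^ 2) > 0 := by
  by_contra h
  push_neg at h
  have hzr : ‖z‖ ≤ r := by nlinarith [norm_nonneg z]
  have h1 : ⟪f, z⟫ ≤ ‖f‖ * ‖z‖ := real_inner_le_norm f z
  have h2 : ‖f‖ * ‖z‖ ≤ ‖f‖ * r := by
    have := norm_nonneg f; nlinarith
  have h3 : (1 / 2 * ‖z‖ ^ 2 - η) ≤ r ^ 2 / 2 - η := by nlinarith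
  have h4 : r ^ 2 / 2 - η < 0 := by linarith
  have h5 : (r ^ 2 / 2 - η) ^ 2 ≤ (1 / 2 * ‖z‖ ^ 2 - η) ^ 2 := by nlinarith
  have h6 : ‖f‖ * r < 1 / 2 * (r ^ 2 / 2 - η) ^ 2 := by
    have := mul_lt_mul_of_pos_right hf hr
    rw [div_mul_eq_mul_div, lt_div_iff₀ hr] at this
    nlinarith
  linarith
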